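/- Let E be a measurable space, P, Q probability measures on E with Q ≪ P, and φ : E → ℝ a measurable function bounded from below such that E^P[exp(−φ)] > 0. Define the probability measure Q* by dQ* = (exp(−φ)/E^P[exp(−φ)]) dP. Then for every probability measure Q with H(Q|P) < ∞, one has E^Q[φ] + H(Q|P) ≥ −log E^P[exp(−φ)], with equality if and only if Q = Q*. In particular inf_Q (E^Q[φ] + H(Q|P)) = −log E^P[exp(−φ)] and Q* is the unique minimizer. -/

import Mathlib

open MeasureTheory

/-- Real-valued relative entropy `H(Q|P) = E^Q[log dQ/dP]`. -/
noncomputable def relEnt2 {Ω : Type*} [MeasurableSpace Ω] (Q P : Measure Ω) : ℝ :=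
  ∫ ω, Real.log ((Q.rnDeriv P ω).toReal) ∂Q

/-- `H(Q|P) < ∞`: `Q ≪ P` and the log-density is `Q`-integrable. -/
def FiniteRelEnt2 {Ω : Type*} [MeasurableSpace Ω] (Q P : Measure Ω) : Prop :=
  Q ≪ P ∧ Integrable (fun ω => Real.log ((Q.rnDeriv P ω).toReal)) Q

open Real ENNReal

lemma exp_decay_aux (s : ℝ) (_hs : 0 ≤ s) : s * Real.exp (-s) ≤ 1 := by
  have h1 : s + 1 ≤ Real.exp s := Real.add_one_le_exp s
  have h3 : 0 < Real.exp s := Real.exp_pos s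
  rw [Real.exp_neg s, mul_inv_le_iff₀ h3]
  linarith

lemma kl_core {Ω : Type*} [MeasurableSpace Ω] (Q ν : Measure Ω) [IsProbabilityMeasure Q]
    [IsProbabilityMeasure ν] (hQν : Q ≪ ν) (h_int : Integrable (llr Q ν) Q) :
    0 ≤ ∫ x, llr Q ν x ∂Q ∧ (∫ x, llr Q ν x ∂Q = 0 → Q = ν) := by
  set g := Q.rnDeriv ν with hg_def
  have hg : Measurable g := Measure.measurable_rnDeriv Q ν
  have hwd : ν.withDensity g = Q := Measure.withDensity_rnDeriv_eq Q ν hQν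
  have hpos : ∀ᵐ x ∂Q, 0 < g x := Measure.rnDeriv_pos hQν
  have hlt : ∀ᵐ x ∂Q, g x < ∞ := hQν.ae_le (Measure.rnDeriv_lt_top Q ν)
  have hls : ∫⁻ x, (g x)⁻¹ ∂Q = ∫⁻ x, g x * (g x)⁻¹ ∂ν := by
    conv_lhs => rw [← hwd]
    rw [lintegral_withDensity_eq_lintegral_mul ν hg (g := fun x => (g x)⁻¹) hg.inv]
    rfl
  have h1 : ∫⁻ x, (g x)⁻¹ ∂Q ≤ 1 := by
    rw [hls]
    calc ∫⁻ x, g x * (g x)⁻¹ ∂ν ≤ ∫⁻ _, 1 ∂ν :=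
          lintegral_mono fun x => ENNReal.mul_inv_le_one _
      _ = 1 := by simp
  have hF_int : Integrable (fun x => ((g x).toReal)⁻¹) Q := by
    have := integrable_toReal_of_lintegral_ne_top hg.inv.aemeasurable
      (h1.trans_lt one_lt_top).ne
    simpa [ENNReal.toReal_inv] using this
  have hofReal : ENNReal.ofReal (∫ x, ((g x).toReal)⁻¹ ∂Q) = ∫⁻ x, (g x)⁻¹ ∂Q := by
    rw [ofReal_integral_eq_lintegral_ofReal hF_int (Filter.Eventually.of_forall fun x => by
      positivity)]
    refine lintegral_congr_ae ?_
    filter_upwards [hpos] with x hx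
    rw [← ENNReal.toReal_inv, ENNReal.ofReal_toReal]
    simp [hx.ne']
  have hFle1 : ∫ x, ((g x).toReal)⁻¹ ∂Q ≤ 1 := by
    have := hofReal ▸ h1
    exact ENNReal.ofReal_le_one.mp this
  have hae : ∀ᵐ x ∂Q, -(llr Q ν x) ≤ ((g x).toReal)⁻¹ - 1 := by
    filter_upwards [hpos, hlt] with x hx hx'
    have ht : 0 < (g x).toReal := ENNReal.toReal_pos hx.ne' hx'.ne
    have := Real.log_le_sub_one_of_pos (inv_pos.mpr ht)
    rw [Real.log_inv] at this
    simpa [llr] using this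
  have h2 : ∫ x, -(llr Q ν x) ∂Q ≤ ∫ x, (((g x).toReal)⁻¹ - 1) ∂Q :=
    integral_mono_ae h_int.neg (hF_int.sub (integrable_const 1)) hae
  rw [integral_neg, integral_sub hF_int (integrable_const 1)] at h2
  simp only [integral_const, measure_univ, probReal_univ, ENNReal.toReal_one, smul_eq_mul, one_mul] at h2
  constructor
  · linarith
  intro h0
  have hG_nonneg : ∀ᵐ x ∂Q, 0 ≤ ((g x).toReal)⁻¹ - 1 + llr Q ν x := by
    filter_upwards [hae] with x hx; linarith
  have hG_int : Integrable (fun x => ((g x).toReal)⁻¹ - 1 + llr Q ν x) Q :=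
    ((hF_int.sub (integrable_const 1)).add h_int : _)
  have hGval : ∫ x, (((g x).toReal)⁻¹ - 1 + llr Q ν x) ∂Q
      = ∫ x, ((g x).toReal)⁻¹ ∂Q - 1 := by
    have hFI : Integrable (fun x => ((g x).toReal)⁻¹ - 1) Q := hF_int.sub (integrable_const 1)
    rw [integral_add hFI h_int, h0, add_zero, integral_sub hF_int (integrable_const 1)]
    simp
  have hGnn : 0 ≤ ∫ x, (((g x).toReal)⁻¹ - 1 + llr Q ν x) ∂Q :=
    integral_nonneg_of_ae hG_nonneg
  have hF1 : ∫ x, ((g x).toReal)⁻¹ ∂Q = 1 := by rw [hGval] at hGnn; linarith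
  have hG0 : (fun x => ((g x).toReal)⁻¹ - 1 + llr Q ν x) =ᵐ[Q] 0 := by
    refine (integral_eq_zero_iff_of_nonneg_ae hG_nonneg hG_int).mp ?_
    rw [hGval, hF1]; ring
  have hQg1 : ∀ᵐ x ∂Q, g x = 1 := by
    filter_upwards [hG0, hpos, hlt] with x hx hxp hxl
    have ht : 0 < (g x).toReal := ENNReal.toReal_pos hxp.ne' hxl.ne
    have hll : llr Q ν x = Real.log (g x).toReal := rfl
    by_contra hne
    have htne : (g x).toReal ≠ 1 := fun h => hne ((ENNReal.toReal_eq_one_iff _).mp h)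
    have hinvne : ((g x).toReal)⁻¹ ≠ 1 := by
      simp only [ne_eq, inv_eq_one]; exact htne
    have := Real.log_lt_sub_one_of_pos (inv_pos.mpr ht) hinvne
    rw [Real.log_inv] at this
    simp only [Pi.zero_apply] at hx
    rw [hll] at hx
    linarith
  have hlint1 : ∫⁻ x, g x * (g x)⁻¹ ∂ν = 1 := by
    rw [← hls, ← hofReal, hF1]; simp
  have h_ae_one : ∀ᵐ x ∂ν, g x * (g x)⁻¹ = 1 := by
    have hsub : ∫⁻ x, (1 - g x * (g x)⁻¹) ∂ν = 0 := by
      rw [lintegral_sub (f := fun _ => 1) (g := fun x => g x * (g x)⁻¹) (hg.mul hg.inv) (by simp [hlint1])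
        (Filter.Eventually.of_forall fun x => ENNReal.mul_inv_le_one _)]
      simp [hlint1]
    have := (lintegral_eq_zero_iff (by measurability)).mp hsub
    filter_upwards [this] with x hx
    simp only [Pi.zero_apply] at hx
    exact le_antisymm (ENNReal.mul_inv_le_one _) (tsub_eq_zero_iff_le.mp hx)
  have h_ne : ∀ᵐ x ∂ν, g x ≠ 0 ∧ g x ≠ ∞ := by
    filter_upwards [h_ae_one] with x hx
    constructor
    · rintro h; rw [h] at hx; simp at hx
    · rintro h; rw [h] at hx; simp at hx
  have hs : MeasurableSet {x | g x ≠ 1} := (hg (measurableSet_singleton 1)).compl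
  have hQs : Q {x | g x ≠ 1} = 0 := hQg1
  have hset : ∫⁻ x in {x | g x ≠ 1}, g x ∂ν = 0 := by
    rw [← withDensity_apply g hs, hwd]; exact hQs
  have hg0s : ∀ᵐ x ∂ν, x ∈ {x | g x ≠ 1} → g x = 0 :=
    (setLIntegral_eq_zero_iff hs hg).mp hset
  have hν1 : g =ᵐ[ν] 1 := by
    filter_upwards [hg0s, h_ne] with x hx hne
    by_contra h
    exact hne.1 (hx h)
  rw [← hwd, withDensity_congr_ae hν1, withDensity_one]


/-- Donsker–Varadhan / Gibbs variational principle: for `φ` measurable and bounded below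
with `E^P[exp(−φ)] > 0`, and `dQ* = (exp(−φ)/E^P[exp(−φ)]) dP`, every probability measure
`Q` with `H(Q|P) < ∞` (and `φ` `Q`-integrable, so that all quantities are finite) satisfies
`E^Q[φ] + H(Q|P) ≥ −log E^P[exp(−φ)]`, with equality iff `Q = Q*`; in particular `Q*` is the
unique minimizer and the infimum equals `−log E^P[exp(−φ)]`. -/
theorem stmt_2 {E : Type*} [MeasurableSpace E] (P : Measure E) [IsProbabilityMeasure P]
    (φ : E → ℝ) (hφmeas : Measurable φ) (m : ℝ) (hφbdd : ∀ x, m ≤ φ x)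
    (hZpos : 0 < ∫ x, Real.exp (-φ x) ∂P)
    (Qstar : Measure E)
    (hQstar : Qstar = P.withDensity (fun x =>
      ENNReal.ofReal (Real.exp (-φ x) / ∫ y, Real.exp (-φ y) ∂P))) :
    (∀ Q : Measure E, IsProbabilityMeasure Q → FiniteRelEnt2 Q P → Integrable φ Q →
        -Real.log (∫ x, Real.exp (-φ x) ∂P) ≤ (∫ x, φ x ∂Q) + relEnt2 Q P) ∧
    ((∫ x, φ x ∂Qstar) + relEnt2 Qstar P = -Real.log (∫ x, Real.exp (-φ x) ∂P)) ∧
    (∀ Q : Measure E, IsProbabilityMeasure Q → FiniteRelEnt2 Q P → Integrable φ Q →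
        (∫ x, φ x ∂Q) + relEnt2 Q P = -Real.log (∫ x, Real.exp (-φ x) ∂P) → Q = Qstar) := by
  set Z := ∫ x, Real.exp (-φ x) ∂P with hZ
  have hexp_int : Integrable (fun x => Real.exp (-φ x)) P := by
    refine Integrable.mono' (integrable_const (Real.exp (-m)))
      (hφmeas.neg.exp.aestronglyMeasurable) ?_
    refine Filter.Eventually.of_forall fun x => ?_
    rw [Real.norm_eq_abs, abs_of_pos (Real.exp_pos _)]
    exact Real.exp_le_exp.mpr (by linarith [hφbdd x])
  have hQstar' : Qstar = P.tilted (fun x => -φ x) := hQstar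
  haveI hQstarProb : IsProbabilityMeasure Qstar := by
    rw [hQstar']; exact isProbabilityMeasure_tilted hexp_int
  have hQstarP : Qstar ≪ P := by rw [hQstar']; exact tilted_absolutelyContinuous P _
  have hPQstar : P ≪ Qstar := by rw [hQstar']; exact absolutelyContinuous_tilted hexp_int
  -- key identity
  have hkey : ∀ Q : Measure E, IsProbabilityMeasure Q → FiniteRelEnt2 Q P → Integrable φ Q →
      Integrable (llr Q Qstar) Q ∧
      ∫ x, llr Q Qstar x ∂Q = relEnt2 Q P + (∫ x, φ x ∂Q) + Real.log Z := by
    intro Q hQprob hfin hφQ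
    obtain ⟨hQP, hllr⟩ := hfin
    have hllr' : Integrable (llr Q P) Q := hllr
    constructor
    · rw [hQstar']
      exact integrable_llr_tilted_right hQP hφQ.neg hllr' hexp_int
    · have hφn : Integrable (fun x => -φ x) Q := hφQ.neg
      rw [hQstar', integral_llr_tilted_right (f := fun x => -φ x) hQP hφn hexp_int hllr',
        integral_neg]
      have hre : relEnt2 Q P = ∫ x, llr Q P x ∂Q := rfl
      rw [hre]; ring
  refine ⟨?_, ?_, ?_⟩
  · -- lower bound
    intro Q hQprob hfin hφQ
    haveI := hQprob
    obtain ⟨hint, heq⟩ := hkey Q hQprob hfin hφQ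
    have hQQstar : Q ≪ Qstar := hfin.1.trans hPQstar
    have hnn := (kl_core Q Qstar hQQstar hint).1
    rw [heq] at hnn
    linarith
  · -- value at Qstar
    have hbdd : ∀ x, |Real.exp (-φ x) / Z * φ x| ≤ (1 + |m|) * Real.exp (-m) / Z := by
      intro x
      have hm := hφbdd x
      have he : 0 < Real.exp (-φ x) := Real.exp_pos _
      rw [abs_mul, abs_of_pos (div_pos he hZpos), div_mul_eq_mul_div,
        div_le_div_iff_of_pos_right hZpos]
      have h1 : |φ x| ≤ (φ x - m) + |m| := by
        cases abs_cases (φ x) with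
        | inl h => cases abs_cases m with
          | inl hm' => linarith [h.1, hm'.1]
          | inr hm' => linarith [h.1, hm'.1]
        | inr h => cases abs_cases m with
          | inl hm' => linarith [h.1, hm'.1]
          | inr hm' => linarith [h.1, hm'.1]
      have h2 : (φ x - m) * Real.exp (-φ x) ≤ Real.exp (-m) := by
        have := exp_decay_aux (φ x - m) (by linarith)
        have heq : Real.exp (-φ x) = Real.exp (-(φ x - m)) * Real.exp (-m) := by
          rw [← Real.exp_add]; ring_nf
        rw [heq, ← mul_assoc]
        calc (φ x - m) * Real.exp (-(φ x - m)) * Real.exp (-m)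
            ≤ 1 * Real.exp (-m) := mul_le_mul_of_nonneg_right this (Real.exp_pos _).le
          _ = Real.exp (-m) := one_mul _
      have h3 : |m| * Real.exp (-φ x) ≤ |m| * Real.exp (-m) :=
        mul_le_mul_of_nonneg_left (Real.exp_le_exp.mpr (by linarith)) (abs_nonneg m)
      calc Real.exp (-φ x) * |φ x| = |φ x| * Real.exp (-φ x) := mul_comm _ _
        _ ≤ ((φ x - m) + |m|) * Real.exp (-φ x) := mul_le_mul_of_nonneg_right h1 he.le
        _ = (φ x - m) * Real.exp (-φ x) + |m| * Real.exp (-φ x) := by ring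
        _ ≤ Real.exp (-m) + |m| * Real.exp (-m) := add_le_add h2 h3
        _ = (1 + |m|) * Real.exp (-m) := by ring
    have hφQstar : Integrable φ Qstar := by
      rw [hQstar]
      rw [show (fun x => ENNReal.ofReal (Real.exp (-φ x) / Z))
          = (fun x => ((Real.exp (-φ x) / Z).toNNReal : ℝ≥0∞)) from rfl]
      rw [integrable_withDensity_iff_integrable_smul₀
        (by exact (hφmeas.neg.exp.div_const Z).real_toNNReal.aemeasurable)]
      refine Integrable.mono' (integrable_const ((1 + |m|) * Real.exp (-m) / Z))
        ?_ (Filter.Eventually.of_forall fun x => ?_)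
      · exact (((hφmeas.neg.exp.div_const Z).real_toNNReal.coe_nnreal_real).aestronglyMeasurable.smul
          hφmeas.aestronglyMeasurable)
      · have hnn : 0 ≤ Real.exp (-φ x) / Z := (div_pos (Real.exp_pos _) hZpos).le
        simp only [NNReal.smul_def, smul_eq_mul, Real.coe_toNNReal _ hnn, Real.norm_eq_abs]
        exact hbdd x
    have hrn : Qstar.rnDeriv P =ᵐ[P] fun x => ENNReal.ofReal (Real.exp (-φ x) / Z) := by
      rw [hQstar']
      exact rnDeriv_tilted_left_self hφmeas.neg.aemeasurable
    have h2 : relEnt2 Qstar P = ∫ x, (-φ x - Real.log Z) ∂Qstar := by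
      refine integral_congr_ae ?_
      filter_upwards [hQstarP.ae_le hrn] with x hx
      rw [hx, ENNReal.toReal_ofReal (div_pos (Real.exp_pos _) hZpos).le,
        Real.log_div (Real.exp_pos _).ne' hZpos.ne', Real.log_exp]
    have hφn : Integrable (fun x => -φ x) Qstar := hφQstar.neg
    rw [h2, integral_sub hφn (integrable_const _), integral_neg]
    simp only [integral_const, measure_univ, probReal_univ, ENNReal.toReal_one, smul_eq_mul, one_mul]
    ring
  · -- uniqueness
    intro Q hQprob hfin hφQ heq0
    haveI := hQprob
    obtain ⟨hint, heq⟩ := hkey Q hQprob hfin hφQ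
    have hQQstar : Q ≪ Qstar := hfin.1.trans hPQstar
    refine (kl_core Q Qstar hQQstar hint).2 ?_
    rw [heq]
    linarith
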